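/- Let V : ℝⁿ → ℝ be continuously differentiable, bounded below and coercive, and (x_n) generated by the discrete gradient method with step sizes τ_n ∈ [c, M], 0 < c ≤ M < ∞. Then lim_{n→∞} ∇V(x_n) = 0. -/

import Mathlib

open scoped RealInnerProductSpace
open Filter

theorem stmt_8 (n : ℕ) (V : EuclideanSpace ℝ (Fin n) → ℝ)
    (hV : ContDiff ℝ 1 V) (hbdd : ∃ C : ℝ, ∀ u, C ≤ V u)
    (hcoercive : ∀ u : ℕ → EuclideanSpace ℝ (Fin n),
      Tendsto (fun k => ‖u k‖) atTop atTop → Tendsto (fun k => V (u k)) atTop atTop)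
    (DG : EuclideanSpace ℝ (Fin n) × EuclideanSpace ℝ (Fin n) → EuclideanSpace ℝ (Fin n))
    (hDGcont : Continuous DG)
    (hDG1 : ∀ u u', ⟪DG (u, u'), u' - u⟫ = V u' - V u)
    (hDG2 : ∀ u, DG (u, u) = gradient V u)
    (x : ℕ → EuclideanSpace ℝ (Fin n)) (τ : ℕ → ℝ) (c M : ℝ)
    (hc : 0 < c) (hcM : ∀ k, c ≤ τ k ∧ τ k ≤ M)
    (hstep : ∀ k, x (k + 1) = x k - τ k • DG (x k, x (k + 1))) :
    Tendsto (fun k => gradient V (x k)) atTop (nhds 0) := by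
  set g : ℕ → ℝ := fun k => ‖DG (x k, x (k + 1))‖ with hg_def
  -- energy dissipation identity
  have hdiss : ∀ k, V (x (k + 1)) = V (x k) - τ k * g k ^ 2 := by
    intro k
    have h1 := hDG1 (x k) (x (k + 1))
    have h2 : x (k + 1) - x k = -(τ k • DG (x k, x (k + 1))) := by
      conv_lhs => rw [hstep k]
      abel
    rw [h2, inner_neg_right, real_inner_smul_right, real_inner_self_eq_norm_sq] at h1
    have := h1.symm
    linarith [this]
  have hgnn : ∀ k, 0 ≤ g k := fun k => norm_nonneg _
  have hτpos : ∀ k, 0 < τ k := fun k => lt_of_lt_of_le hc (hcM k).1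
  have hanti : Antitone (fun k => V (x k)) := by
    apply antitone_nat_of_succ_le
    intro k
    have := hdiss k
    nlinarith [hτpos k, sq_nonneg (g k), hgnn k]
  -- V (x k) converges, so dissipation tends to 0
  obtain ⟨C, hC⟩ := hbdd
  have hbb : BddBelow (Set.range fun k => V (x k)) := ⟨C, by rintro y ⟨k, rfl⟩; exact hC _⟩
  have hVlim : Tendsto (fun k => V (x k)) atTop (nhds (⨅ k, V (x k))) :=
    tendsto_atTop_ciInf hanti hbb
  have hVlim' : Tendsto (fun k => V (x (k + 1))) atTop (nhds (⨅ k, V (x k))) :=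
    hVlim.comp (tendsto_add_atTop_nat 1)
  have hdisslim : Tendsto (fun k => τ k * g k ^ 2) atTop (nhds 0) := by
    have := hVlim.sub hVlim'
    simp only [sub_self] at this
    have heq : (fun k => τ k * g k ^ 2) = fun k => V (x k) - V (x (k + 1)) := by
      funext k; rw [hdiss k]; ring
    rw [heq]; exact this
  -- hence g → 0
  have hg2lim : Tendsto (fun k => g k ^ 2) atTop (nhds 0) := by
    have hupper : Tendsto (fun k => c⁻¹ * (τ k * g k ^ 2)) atTop (nhds 0) := by
      have := hdisslim.const_mul c⁻¹
      simpa using this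
    apply squeeze_zero (fun k => sq_nonneg (g k)) _ hupper
    intro k
    rw [← mul_le_mul_iff_right₀ hc, mul_inv_cancel_left₀ (ne_of_gt hc)]
    exact mul_le_mul_of_nonneg_right (hcM k).1 (sq_nonneg _)
  have hglim : Tendsto g atTop (nhds 0) := by
    have h := hg2lim.sqrt
    rw [Real.sqrt_zero] at h
    have : (fun k => Real.sqrt (g k ^ 2)) = g := by
      funext k; exact Real.sqrt_sq (hgnn k)
    rwa [this] at h
  -- the iterates stay in the compact sublevel set K
  set K : Set (EuclideanSpace ℝ (Fin n)) := {u | V u ≤ V (x 0)} with hK_def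
  have hxK : ∀ k, x k ∈ K := by
    intro k
    exact hanti (Nat.zero_le k)
  have hKcompact : IsCompact K := by
    apply Metric.isCompact_of_isClosed_isBounded
    · exact isClosed_le hV.continuous continuous_const
    · by_contra hb
      rw [isBounded_iff_forall_norm_le] at hb
      push_neg at hb
      choose u hu hu' using fun k : ℕ => hb k
      have hnorm : Tendsto (fun k => ‖u k‖) atTop atTop := by
        apply tendsto_atTop_mono (fun k => le_of_lt (hu' k))
        exact tendsto_natCast_atTop_atTop
      have := (hcoercive u hnorm).eventually_gt_atTop (V (x 0))
      obtain ⟨k, hk⟩ := this.exists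
      exact absurd (hu k) (not_le.mpr hk)
  have hKK : IsCompact (K ×ˢ K) := hKcompact.prod hKcompact
  have hUC : UniformContinuousOn DG (K ×ˢ K) :=
    hKK.uniformContinuousOn_of_continuous hDGcont.continuousOn
  have hM : 0 < M := lt_of_lt_of_le (lt_of_lt_of_le hc (hcM 0).1) (hcM 0).2
  -- final epsilon argument
  rw [NormedAddCommGroup.tendsto_nhds_zero]
  intro ε hε
  obtain ⟨δ, hδ, hδ'⟩ := (Metric.uniformContinuousOn_iff.mp hUC) (ε / 2) (by positivity)
  have hmin : (0 : ℝ) < min (ε / 2) (δ / M) := by positivity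
  filter_upwards [hglim.eventually_lt_const hmin] with k hk
  have hk1 : g k < ε / 2 := lt_of_lt_of_le hk (min_le_left _ _)
  have hk2 : g k < δ / M := lt_of_lt_of_le hk (min_le_right _ _)
  have hmem1 : (x k, x k) ∈ K ×ˢ K := ⟨hxK k, hxK k⟩
  have hmem2 : (x k, x (k + 1)) ∈ K ×ˢ K := ⟨hxK k, hxK (k + 1)⟩
  have hdist : dist (x k, x k) (x k, x (k + 1)) < δ := by
    rw [Prod.dist_eq]
    simp only [dist_self]
    rw [max_eq_right dist_nonneg]
    have : dist (x k) (x (k + 1)) = τ k * g k := by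
      rw [dist_eq_norm, hstep k]
      rw [show x k - (x k - τ k • DG (x k, x (k + 1))) = τ k • DG (x k, x (k + 1)) by abel]
      rw [norm_smul, Real.norm_eq_abs, abs_of_pos (hτpos k)]
    rw [this]
    calc τ k * g k ≤ M * g k := mul_le_mul_of_nonneg_right (hcM k).2 (hgnn k)
      _ < M * (δ / M) := by exact mul_lt_mul_of_pos_left hk2 hM
      _ = δ := by field_simp
  have hclose := hδ' _ hmem1 _ hmem2 hdist
  have : ‖gradient V (x k)‖ ≤ dist (DG (x k, x k)) (DG (x k, x (k + 1))) + g k := by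
    rw [← hDG2 (x k), dist_eq_norm]
    calc ‖DG (x k, x k)‖
        = ‖DG (x k, x k) - DG (x k, x (k + 1)) + DG (x k, x (k + 1))‖ := by
          rw [sub_add_cancel]
      _ ≤ ‖DG (x k, x k) - DG (x k, x (k + 1))‖ + ‖DG (x k, x (k + 1))‖ := norm_add_le _ _
  linarith
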